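/- Let A, B ∈ ℝ^{n×d} be matrices, and let C be the matrix obtained by appending the row a_i^T to B. If a_i is orthogonal to Ker(B), then the relative leverage score τ_i^B(A) := a_i^T (C^T C)^+ a_i equals (a_i^T (B^T B)^+ a_i)/(a_i^T (B^T B)^+ a_i + 1); if a_i is not orthogonal to Ker(B), then τ_i^B(A) = 1. -/

import Mathlib

open Matrix

section helpers
variable {d : Type*} [Fintype d]

private lemma vmv_mul (u v : d → ℝ) (M : Matrix d d ℝ) :
    vecMulVec u v * M = vecMulVec u (v ᵥ* M) := by
  ext i j
  simp [mul_apply, vecMulVec_apply, vecMul, dotProduct, Finset.mul_sum, mul_assoc]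

private lemma mul_vmv (u v : d → ℝ) (M : Matrix d d ℝ) :
    M * vecMulVec u v = vecMulVec (M *ᵥ u) v := by
  ext i j
  simp [mul_apply, vecMulVec_apply, mulVec, dotProduct, Finset.sum_mul, mul_assoc]

private lemma vmv_mulVec (u v w : d → ℝ) : vecMulVec u v *ᵥ w = (v ⬝ᵥ w) • u := by
  ext i
  rw [mulVec, dotProduct, Pi.smul_apply, smul_eq_mul, dotProduct, Finset.sum_mul]
  exact Finset.sum_congr rfl fun x _ => by rw [vecMulVec_apply]; ring

private lemma vecMul_vmv (u v w : d → ℝ) : u ᵥ* vecMulVec v w = (u ⬝ᵥ v) • w := by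
  ext j
  simp [vecMul, vecMulVec_apply, dotProduct, Finset.sum_mul, mul_assoc]

omit [Fintype d] in
private lemma vmv_transpose (u v : d → ℝ) : (vecMulVec u v)ᵀ = vecMulVec v u := by
  ext i j; simp [vecMulVec_apply, mul_comm]

omit [Fintype d] in
private lemma smul_vmv (r : ℝ) (u v : d → ℝ) :
    vecMulVec (r • u) v = r • vecMulVec u v := by
  ext i j; simp [vecMulVec_apply]; ring

omit [Fintype d] in
private lemma vmv_smul (u : d → ℝ) (r : ℝ) (v : d → ℝ) :
    vecMulVec u (r • v) = r • vecMulVec u v := by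
  ext i j; simp [vecMulVec_apply]; ring

end helpers

/-- `B` is the Moore–Penrose pseudoinverse of `A`. -/
def IsMoorePenrose {n d : Type*} [Fintype n] [Fintype d]
    (A : Matrix n d ℝ) (B : Matrix d n ℝ) : Prop :=
  A * B * A = A ∧ B * A * B = B ∧ (A * B)ᵀ = A * B ∧ (B * A)ᵀ = B * A

private lemma mp_unique {n d : Type*} [Fintype n] [Fintype d]
    {X : Matrix n d ℝ} {P1 P2 : Matrix d n ℝ}
    (h1 : IsMoorePenrose X P1) (h2 : IsMoorePenrose X P2) : P1 = P2 := by
  obtain ⟨a1, b1, c1, d1⟩ := h1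
  obtain ⟨a2, b2, c2, d2⟩ := h2
  have e2 : Xᵀ = Xᵀ * P2ᵀ * Xᵀ := by
    conv_lhs => rw [← a2]
    simp only [transpose_mul, Matrix.mul_assoc]
  have hXP : X * P1 = X * P2 := by
    calc X * P1 = (X * P1)ᵀ := c1.symm
    _ = P1ᵀ * Xᵀ := transpose_mul _ _
    _ = P1ᵀ * (Xᵀ * P2ᵀ * Xᵀ) := by conv_lhs => rw [e2]
    _ = (P1ᵀ * Xᵀ) * (P2ᵀ * Xᵀ) := by simp only [Matrix.mul_assoc]
    _ = (X * P1)ᵀ * (X * P2)ᵀ := by rw [transpose_mul, transpose_mul]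
    _ = (X * P1) * (X * P2) := by rw [c1, c2]
    _ = (X * P1 * X) * P2 := by simp only [Matrix.mul_assoc]
    _ = X * P2 := by rw [a1]
  have hPX : P1 * X = P2 * X := by
    calc P1 * X = (P1 * X)ᵀ := d1.symm
    _ = Xᵀ * P1ᵀ := transpose_mul _ _
    _ = (Xᵀ * P2ᵀ * Xᵀ) * P1ᵀ := by conv_lhs => rw [e2]
    _ = (Xᵀ * P2ᵀ) * (Xᵀ * P1ᵀ) := by simp only [Matrix.mul_assoc]
    _ = (P2 * X)ᵀ * (P1 * X)ᵀ := by rw [transpose_mul, transpose_mul]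
    _ = (P2 * X) * (P1 * X) := by rw [d1, d2]
    _ = P2 * (X * P1 * X) := by simp only [Matrix.mul_assoc]
    _ = P2 * X := by rw [a1]
  calc P1 = P1 * X * P1 := b1.symm
  _ = P1 * (X * P1) := Matrix.mul_assoc _ _ _
  _ = P1 * (X * P2) := by rw [hXP]
  _ = (P1 * X) * P2 := (Matrix.mul_assoc _ _ _).symm
  _ = (P2 * X) * P2 := by rw [hPX]
  _ = P2 := b2

private lemma mp_symm {d : Type*} [Fintype d]
    {X P : Matrix d d ℝ} (hX : Xᵀ = X) (h : IsMoorePenrose X P) : Pᵀ = P := by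
  obtain ⟨a, b, c, e⟩ := h
  have h2 : IsMoorePenrose X Pᵀ := by
    refine ⟨?_, ?_, ?_, ?_⟩
    · calc X * Pᵀ * X = (Xᵀ * P * Xᵀ)ᵀ := by simp [transpose_mul, Matrix.mul_assoc]
      _ = (X * P * X)ᵀ := by rw [hX]
      _ = Xᵀ := by rw [a]
      _ = X := hX
    · calc Pᵀ * X * Pᵀ = (P * Xᵀ * P)ᵀ := by simp [transpose_mul, Matrix.mul_assoc]
      _ = (P * X * P)ᵀ := by rw [hX]
      _ = Pᵀ := by rw [b]
    · rw [transpose_mul, transpose_transpose, hX, ← e, transpose_mul, hX]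
    · rw [transpose_mul, transpose_transpose, hX, ← c, transpose_mul, hX]
  exact mp_unique h2 ⟨a, b, c, e⟩

/-- The relative leverage score `τ_i^B(A) = aᵢᵀ (CᵀC)⁺ aᵢ`, where `C` is `B` with the row
`aᵢᵀ` appended, equals `aᵢᵀ(BᵀB)⁺aᵢ / (aᵢᵀ(BᵀB)⁺aᵢ + 1)` if `aᵢ ⟂ Ker B`, and `1` otherwise. -/
theorem relative_leverage_score_formula {n m d : ℕ}
    (A : Matrix (Fin n) (Fin d) ℝ) (B : Matrix (Fin m) (Fin d) ℝ) (i : Fin n)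
    (C : Matrix (Fin (m + 1)) (Fin d) ℝ) (hC : C = Matrix.of (Fin.snoc B (A i)))
    (P : Matrix (Fin d) (Fin d) ℝ) (hP : IsMoorePenrose (Cᵀ * C) P)
    (Q : Matrix (Fin d) (Fin d) ℝ) (hQ : IsMoorePenrose (Bᵀ * B) Q) :
    ((∀ v : Fin d → ℝ, B *ᵥ v = 0 → A i ⬝ᵥ v = 0) →
      A i ⬝ᵥ (P *ᵥ A i) = (A i ⬝ᵥ (Q *ᵥ A i)) / (A i ⬝ᵥ (Q *ᵥ A i) + 1)) ∧
    ((¬ ∀ v : Fin d → ℝ, B *ᵥ v = 0 → A i ⬝ᵥ v = 0) →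
      A i ⬝ᵥ (P *ᵥ A i) = 1) := by
  set a : Fin d → ℝ := A i with ha
  set M : Matrix (Fin d) (Fin d) ℝ := Bᵀ * B with hM
  have hMsym : Mᵀ = M := by rw [hM, transpose_mul, transpose_transpose]
  have hN : Cᵀ * C = M + vecMulVec a a := by
    rw [hC, hM]; ext j k
    simp [mul_apply, Fin.sum_univ_castSucc, vecMulVec_apply, mul_comm]
    exact congrArg₂ (· + ·) (Finset.sum_congr rfl fun r _ => by
      rw [show Fin.snoc (α := fun _ => Fin d → ℝ) B a r.castSucc = B r from Fin.snoc_castSucc _ _ _])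
      (by rw [show Fin.snoc (α := fun _ => Fin d → ℝ) B a (Fin.last m) = a from Fin.snoc_last _ _])
  set N : Matrix (Fin d) (Fin d) ℝ := M + vecMulVec a a with hNdef
  rw [hN] at hP
  have hNsym : Nᵀ = N := by
    rw [hNdef, transpose_add, hMsym, vmv_transpose]
  have hQsym : Qᵀ = Q := mp_symm hMsym hQ
  obtain ⟨q1, q2, q3, q4⟩ := hQ
  obtain ⟨p1, p2, p3, p4⟩ := hP
  -- key quadratic form identity
  have key : ∀ w : Fin d → ℝ, w ⬝ᵥ (M *ᵥ w) = (B *ᵥ w) ⬝ᵥ (B *ᵥ w) := by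
    intro w
    conv_lhs => rw [hM, ← Matrix.mulVec_mulVec, dotProduct_mulVec,
      ← Matrix.mulVec_transpose Bᵀ w, transpose_transpose]
  constructor
  · -- orthogonal case
    intro horth
    have hQM : Q * M = M * Q := by
      calc Q * M = Qᵀ * Mᵀ := by rw [hQsym, hMsym]
      _ = (M * Q)ᵀ := (transpose_mul _ _).symm
      _ = M * Q := q3
    set u : Fin d → ℝ := Q *ᵥ a with hu
    have hMMQ : M * (M * Q) = M := by
      rw [← hQM, ← Matrix.mul_assoc]; exact q1
    have hMu : M *ᵥ u = a := by
      set w : Fin d → ℝ := a - M *ᵥ u with hw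
      have hMw : M *ᵥ w = 0 := by
        rw [hw, Matrix.mulVec_sub, sub_eq_zero, hu, Matrix.mulVec_mulVec,
          Matrix.mulVec_mulVec, Matrix.mul_assoc, hMMQ]
      have hBw : B *ᵥ w = 0 := by
        have h0 : (B *ᵥ w) ⬝ᵥ (B *ᵥ w) = 0 := by
          rw [← key, hMw, dotProduct_zero]
        exact dotProduct_self_eq_zero.mp h0
      have haw : a ⬝ᵥ w = 0 := horth w hBw
      have hww : w ⬝ᵥ w = 0 := by
        have h1 : w ⬝ᵥ a = 0 := by rw [dotProduct_comm]; exact haw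
        have h2 : w ⬝ᵥ (M *ᵥ u) = 0 := by
          rw [dotProduct_mulVec, ← Matrix.mulVec_transpose, hMsym, hMw,
            zero_dotProduct]
        calc w ⬝ᵥ w = w ⬝ᵥ (a - M *ᵥ u) := by rw [← hw]
        _ = w ⬝ᵥ a - w ⬝ᵥ (M *ᵥ u) := dotProduct_sub _ _ _
        _ = 0 := by rw [h1, h2, sub_zero]
      have hw0 : w = 0 := dotProduct_self_eq_zero.mp hww
      rw [hw] at hw0
      exact (sub_eq_zero.mp hw0).symm
    set q : ℝ := a ⬝ᵥ u with hq
    have hq_nonneg : 0 ≤ q := by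
      have hqe : q = (B *ᵥ u) ⬝ᵥ (B *ᵥ u) := by
        calc q = a ⬝ᵥ u := hq
        _ = u ⬝ᵥ a := dotProduct_comm _ _
        _ = u ⬝ᵥ (M *ᵥ u) := by rw [hMu]
        _ = (B *ᵥ u) ⬝ᵥ (B *ᵥ u) := key u
      rw [hqe, dotProduct]
      exact Finset.sum_nonneg fun x _ => mul_self_nonneg _
    have hq1 : q + 1 ≠ 0 := by positivity
    set c : ℝ := (q + 1)⁻¹ with hc
    have hcq : c * (q + 1) = 1 := inv_mul_cancel₀ hq1
    set R : Matrix (Fin d) (Fin d) ℝ := Q - c • vecMulVec u u with hR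
    have haQ : a ᵥ* Q = u := by
      conv_rhs => rw [hu, ← hQsym]
      rw [Matrix.mulVec_transpose]
    have huM : u ᵥ* M = a := by
      rw [← Matrix.mulVec_transpose, hMsym, hMu]
    have hMQa : (M * Q) *ᵥ a = a := by
      rw [← Matrix.mulVec_mulVec, ← hu, hMu]
    have hua : u ⬝ᵥ a = q := by rw [dotProduct_comm]
    have hNR : N * R = M * Q := by
      calc N * R = M * Q + ((1 : ℝ) - c * (q + 1)) • vecMulVec a u := by
            simp only [hNdef, hR, add_mul, mul_sub, Matrix.mul_smul,
              mul_vmv, vmv_mul, hMu, haQ, vecMul_vmv, vmv_smul, smul_vmv,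
              vmv_mulVec, smul_smul, ← hq]
            module
      _ = M * Q := by rw [hcq, sub_self, zero_smul, add_zero]
    have hRN : R * N = M * Q := by
      calc R * N = M * Q + ((1 : ℝ) - c * (q + 1)) • vecMulVec u a := by
            simp only [hNdef, hR, mul_add, Matrix.sub_mul, Matrix.smul_mul,
              vmv_mul, mul_vmv, huM, ← hu, vecMul_vmv, vmv_smul, smul_vmv,
              vmv_mulVec, smul_smul, hQM, hua]
            module
      _ = M * Q := by rw [hcq, sub_self, zero_smul, add_zero]
    have mp1 : N * R * N = N := by
      calc N * R * N = (M * Q) * N := by rw [hNR]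
      _ = M * Q * M + (M * Q) * vecMulVec a a := by rw [hNdef, Matrix.mul_add]
      _ = M + vecMulVec a a := by rw [q1, mul_vmv, hMQa]
      _ = N := hNdef.symm
    have mp2 : R * N * R = R := by
      calc R * N * R = R * (N * R) := Matrix.mul_assoc _ _ _
      _ = R * (M * Q) := by rw [hNR]
      _ = Q * (M * Q) - c • (vecMulVec u u * (M * Q)) := by
            rw [hR, Matrix.sub_mul, Matrix.smul_mul]
      _ = Q - c • vecMulVec u u := by
            rw [← Matrix.mul_assoc, q2, vmv_mul, ← Matrix.vecMul_vecMul, huM, haQ]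
      _ = R := hR.symm
    have mp3 : (N * R)ᵀ = N * R := by rw [hNR]; exact q3
    have mp4 : (R * N)ᵀ = R * N := by rw [hRN]; exact q3
    have hPR : P = R := mp_unique ⟨p1, p2, p3, p4⟩ ⟨mp1, mp2, mp3, mp4⟩
    rw [hPR, hR, Matrix.sub_mulVec, dotProduct_sub, smul_mulVec,
      vmv_mulVec, hua, dotProduct_smul, dotProduct_smul, ← hu, ← hq,
      smul_eq_mul, smul_eq_mul, hc]
    field_simp
    ring
  · -- non-orthogonal case
    intro h
    push_neg at h
    obtain ⟨v, hBv, hav⟩ := h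
    set s : ℝ := a ⬝ᵥ v with hs
    have hNv : N *ᵥ v = s • a := by
      rw [hNdef, Matrix.add_mulVec, vmv_mulVec, hM, ← Matrix.mulVec_mulVec, hBv,
        Matrix.mulVec_zero, zero_add, hs]
    set y : Fin d → ℝ := s⁻¹ • v with hy
    have hNy : N *ᵥ y = a := by
      rw [hy, Matrix.mulVec_smul, hNv, smul_smul, inv_mul_cancel₀ hav, one_smul]
    have hya : y ⬝ᵥ a = 1 := by
      rw [hy, smul_dotProduct, smul_eq_mul, dotProduct_comm, ← hs,
        inv_mul_cancel₀ hav]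
    calc a ⬝ᵥ (P *ᵥ a) = (N *ᵥ y) ⬝ᵥ (P *ᵥ (N *ᵥ y)) := by rw [hNy]
    _ = (y ᵥ* Nᵀ) ⬝ᵥ (P *ᵥ (N *ᵥ y)) := by rw [← Matrix.mulVec_transpose, transpose_transpose]
    _ = y ⬝ᵥ (Nᵀ *ᵥ (P *ᵥ (N *ᵥ y))) := (dotProduct_mulVec _ _ _).symm
    _ = y ⬝ᵥ ((N * P * N) *ᵥ y) := by
        rw [hNsym, Matrix.mulVec_mulVec, Matrix.mulVec_mulVec, Matrix.mul_assoc]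
    _ = y ⬝ᵥ (N *ᵥ y) := by rw [p1]
    _ = 1 := by rw [hNy, hya]
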